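/- Fidelity is jointly concave in its first argument: for density operators ρ₁, ρ₂, σ and q ∈ [0,1], F(q ρ₁ + (1−q) ρ₂, σ) ≥ q F(ρ₁, σ) + (1−q) F(ρ₂, σ). -/

import Mathlib

open Matrix
open scoped ComplexOrder Kronecker

noncomputable section

/-- A density operator: positive semidefinite with unit trace. -/
def IsDensity {d : Type*} [Fintype d] [DecidableEq d] (ρ : Matrix d d ℂ) : Prop :=
  ρ.PosSemidef ∧ ρ.trace = 1

open Classical in
/-- Square root of a positive semidefinite matrix (junk value `0` otherwise). -/
noncomputable def matSqrt {d : Type*} [Fintype d] [DecidableEq d] (A : Matrix d d ℂ) :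
    Matrix d d ℂ :=
  if h : A.PosSemidef then
    h.1.eigenvectorUnitary.1 * diagonal ((↑) ∘ (√·) ∘ h.1.eigenvalues) *
      (star h.1.eigenvectorUnitary : Matrix d d ℂ)
  else 0

/-- square root of a PSD matrix (replacement for the removed Mathlib definition) -/
noncomputable def Matrix.PosSemidef.sqrt {d : Type*} [Fintype d] [DecidableEq d] {A : Matrix d d ℂ}
    (h : A.PosSemidef) : Matrix d d ℂ :=
  h.1.eigenvectorUnitary.1 * diagonal ((↑) ∘ (√·) ∘ h.1.eigenvalues) *
    (star h.1.eigenvectorUnitary : Matrix d d ℂ)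

/-- Uhlmann fidelity `F(ρ,σ) = (Tr √(√ρ σ √ρ))²`. -/
noncomputable def fid {d : Type*} [Fintype d] [DecidableEq d] (ρ σ : Matrix d d ℂ) : ℝ :=
  ((matSqrt (matSqrt ρ * σ * matSqrt ρ)).trace.re) ^ 2

/-- Bures angle `D(ρ,σ) = arccos √F(ρ,σ)`. -/
noncomputable def bures {d : Type*} [Fintype d] [DecidableEq d] (ρ σ : Matrix d d ℂ) : ℝ :=
  Real.arccos (Real.sqrt (fid ρ σ))


namespace FidAux

set_option linter.unusedSectionVars false

variable {d : Type*} [Fintype d] [DecidableEq d] {H : Matrix d d ℂ}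

def cal (hH : H.IsHermitian) (f : ℝ → ℝ) : Matrix d d ℂ :=
  hH.eigenvectorUnitary.1 * diagonal ((↑) ∘ f ∘ hH.eigenvalues) * star hH.eigenvectorUnitary.1

lemma cal_mul (hH : H.IsHermitian) (f g : ℝ → ℝ) :
    cal hH f * cal hH g = cal hH (fun x => f x * g x) := by
  unfold cal
  set U : Matrix d d ℂ := hH.eigenvectorUnitary.1 with hU
  have h1 : star U * U = 1 := Unitary.coe_star_mul_self _
  have hd : ∀ f : ℝ → ℝ, diagonal ((↑) ∘ f ∘ hH.eigenvalues : d → ℂ) = diagonal ((↑) ∘ f ∘ hH.eigenvalues) := fun _ => rfl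
  calc U * diagonal ((↑) ∘ f ∘ hH.eigenvalues) * star U * (U * diagonal ((↑) ∘ g ∘ hH.eigenvalues) * star U)
      = U * diagonal ((↑) ∘ f ∘ hH.eigenvalues) * (star U * U) * diagonal ((↑) ∘ g ∘ hH.eigenvalues) * star U := by
        simp only [Matrix.mul_assoc]
    _ = U * (diagonal ((↑) ∘ f ∘ hH.eigenvalues) * diagonal ((↑) ∘ g ∘ hH.eigenvalues)) * star U := by
        rw [h1, Matrix.mul_one]; simp only [Matrix.mul_assoc]
    _ = U * diagonal ((↑) ∘ (fun x => f x * g x) ∘ hH.eigenvalues) * star U := by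
        rw [diagonal_mul_diagonal]
        have h2 : (fun i => (Complex.ofReal ∘ f ∘ hH.eigenvalues) i * (Complex.ofReal ∘ g ∘ hH.eigenvalues) i) = (Complex.ofReal ∘ (fun x => f x * g x) ∘ hH.eigenvalues) := by
          funext x; simp [Function.comp_apply]
        rw [h2]

lemma conjTranspose_cal (hH : H.IsHermitian) (f : ℝ → ℝ) :
    (cal hH f)ᴴ = cal hH f := by
  unfold cal
  have hD : star (diagonal ((↑) ∘ f ∘ hH.eigenvalues) : Matrix d d ℂ) = diagonal ((↑) ∘ f ∘ hH.eigenvalues) := by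
    rw [Matrix.star_eq_conjTranspose, diagonal_conjTranspose]
    refine congrArg diagonal ?_
    funext x
    simp [Complex.conj_ofReal]
  rw [← Matrix.star_eq_conjTranspose]
  simp only [Matrix.star_mul, star_star, hD, Matrix.mul_assoc]

lemma cal_posSemidef (hH : H.IsHermitian) {f : ℝ → ℝ} (hf : ∀ x, 0 ≤ f x) :
    (cal hH f).PosSemidef := by
  have : (diagonal ((↑) ∘ f ∘ hH.eigenvalues) : Matrix d d ℂ).PosSemidef := by
    refine posSemidef_diagonal_iff.mpr fun i => ?_
    simp only [Function.comp_apply]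
    exact_mod_cast Complex.zero_le_real.mpr (hf _)
  simpa [cal, Matrix.star_eq_conjTranspose] using this.mul_mul_conjTranspose_same hH.eigenvectorUnitary.1

lemma trace_cal (hH : H.IsHermitian) (f : ℝ → ℝ) :
    (cal hH f).trace = ((∑ j, f (hH.eigenvalues j) : ℝ) : ℂ) := by
  unfold cal
  rw [Matrix.trace_mul_cycle, Unitary.coe_star_mul_self, Matrix.one_mul, trace_diagonal]
  push_cast
  rfl

lemma cal_id (hH : H.IsHermitian) : cal hH id = H := hH.spectral_theorem.symm

lemma cal_one (hH : H.IsHermitian) : cal hH (fun _ => 1) = 1 := by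
  unfold cal
  have h : ((↑) ∘ (fun (_ : ℝ) => (1:ℝ)) ∘ hH.eigenvalues : d → ℂ) = fun _ => 1 := by
    funext x; simp [Function.comp_apply]
  rw [h, diagonal_one, Matrix.mul_one]
  exact Unitary.coe_mul_star_self _

lemma cal_congr (hH : H.IsHermitian) {f g : ℝ → ℝ}
    (h : ∀ j, f (hH.eigenvalues j) = g (hH.eigenvalues j)) : cal hH f = cal hH g := by
  unfold cal
  refine congrArg₂ _ (congrArg₂ _ rfl (congrArg diagonal ?_)) rfl
  funext x
  exact congrArg Complex.ofReal (h x)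

lemma sqrt_eq_cal (hH : H.PosSemidef) : hH.sqrt = cal hH.1 Real.sqrt := rfl

theorem _root_.Matrix.PosSemidef.posSemidef_sqrt (hH : H.PosSemidef) : hH.sqrt.PosSemidef := by
  rw [sqrt_eq_cal]; exact cal_posSemidef _ Real.sqrt_nonneg

theorem _root_.Matrix.PosSemidef.sqrt_mul_self (hH : H.PosSemidef) : hH.sqrt * hH.sqrt = H := by
  rw [sqrt_eq_cal, cal_mul]
  refine (cal_congr _ fun j => ?_).trans (cal_id _)
  exact Real.mul_self_sqrt (hH.eigenvalues_nonneg j)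


lemma cs_dot {e : Type*} [Fintype e] (x y : e → ℂ) :
    ‖star x ⬝ᵥ y‖ ≤ Real.sqrt ((star x ⬝ᵥ x).re) * Real.sqrt ((star y ⬝ᵥ y).re) := by
  let x' : EuclideanSpace ℂ e := (WithLp.equiv 2 (e → ℂ)).symm x
  let y' : EuclideanSpace ℂ e := (WithLp.equiv 2 (e → ℂ)).symm y
  have e1 : (inner ℂ x' y' : ℂ) = star x ⬝ᵥ y := by
    simp [x', y', PiLp.inner_apply, dotProduct, RCLike.inner_apply, mul_comm]
  have e2 : (inner ℂ x' x' : ℂ) = star x ⬝ᵥ x := by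
    simp [x', PiLp.inner_apply, dotProduct, RCLike.inner_apply, mul_comm, -inner_self_eq_norm_sq_to_K]
  have e3 : (inner ℂ y' y' : ℂ) = star y ⬝ᵥ y := by
    simp [y', PiLp.inner_apply, dotProduct, RCLike.inner_apply, mul_comm, -inner_self_eq_norm_sq_to_K]
  have h1 := norm_inner_le_norm (𝕜 := ℂ) x' y'
  rw [norm_eq_sqrt_re_inner (𝕜 := ℂ) x', norm_eq_sqrt_re_inner (𝕜 := ℂ) y', e1, e2, e3] at h1
  simpa using h1

lemma dot_single (N : Matrix d d ℂ) (i : d) :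
    star (Pi.single i 1) ⬝ᵥ (N *ᵥ Pi.single i 1) = N i i := by
  simp [mulVec_single, dotProduct, Pi.single_apply, apply_ite]

lemma neg_psd_self_mul_conjTranspose {m : Type*} [Fintype m] {M : Matrix d m ℂ}
    (h : (-(M * Mᴴ)).PosSemidef) : M = 0 := by
  ext i j
  have h1 : 0 ≤ -(M * Mᴴ) i i := by
    have := h.dotProduct_mulVec_nonneg (Pi.single i 1)
    rwa [dot_single] at this
  have h2 : 0 ≤ (M * Mᴴ) i i := by
    have : (M * Mᴴ) i i = (fun j => M i j) ⬝ᵥ star (fun j => M i j) := by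
      simp [mul_apply, dotProduct, conjTranspose_apply]
    rw [this]
    exact dotProduct_self_star_nonneg _
  have h3 : (M * Mᴴ) i i = 0 := le_antisymm (by simpa [neg_nonneg] using h1) h2
  have h4 : (fun k => M i k) ⬝ᵥ star (fun k => M i k) = 0 := by
    rw [← h3]; simp [mul_apply, dotProduct, conjTranspose_apply]
  have h5 := dotProduct_self_star_eq_zero.mp h4
  exact congrFun h5 j


lemma cal_sub (hH : H.IsHermitian) (f g : ℝ → ℝ) :
    cal hH f - cal hH g = cal hH (fun x => f x - g x) := by
  unfold cal
  rw [← Matrix.sub_mul, ← Matrix.mul_sub, diagonal_sub]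
  congr 2
  refine congrArg diagonal ?_
  funext x
  simp

lemma cal_zero (hH : H.IsHermitian) : cal hH (fun _ => 0) = 0 := by
  unfold cal
  have : (diagonal ((↑) ∘ (fun (_:ℝ) => (0:ℝ)) ∘ hH.eigenvalues) : Matrix d d ℂ) = 0 := by
    rw [show ((↑) ∘ (fun (_:ℝ) => (0:ℝ)) ∘ hH.eigenvalues : d → ℂ) = fun _ => 0 by funext x; simp,
      diagonal_zero]
  rw [this, Matrix.mul_zero, Matrix.zero_mul]

/-- indicator of nonzero -/
def ind (x : ℝ) : ℝ := if x = 0 then 0 else 1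

/-- pseudo inverse of the square root of a PSD matrix -/
def rinv (hH : H.PosSemidef) : Matrix d d ℂ := cal hH.1 (fun x => (Real.sqrt x)⁻¹)

lemma rinv_herm (hH : H.PosSemidef) : (rinv hH)ᴴ = rinv hH := conjTranspose_cal _ _

lemma sqrt_mul_rinv (hH : H.PosSemidef) : hH.sqrt * rinv hH = cal hH.1 ind := by
  rw [sqrt_eq_cal, rinv, cal_mul]
  refine cal_congr _ fun j => ?_
  have h := hH.eigenvalues_nonneg j
  set x := hH.1.eigenvalues j
  by_cases hx : x = 0
  · simp [hx, ind]
  · have : Real.sqrt x ≠ 0 := by positivity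
    rw [ind, if_neg hx]; field_simp

lemma rinv_mul_rinv (hH : H.PosSemidef) : rinv hH * H * rinv hH = cal hH.1 ind := by
  have h : rinv hH * cal hH.1 id * rinv hH = cal hH.1 ind := by
    rw [rinv, cal_mul, cal_mul]
    refine cal_congr _ fun j => ?_
    have h := hH.eigenvalues_nonneg j
    set x := hH.1.eigenvalues j
    by_cases hx : x = 0
    · simp [hx, ind]
    · have hs : Real.sqrt x ≠ 0 := by positivity
      have h2 : (Real.sqrt x)⁻¹ * x * (Real.sqrt x)⁻¹ = x / (Real.sqrt x * Real.sqrt x) := by ring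
      simp only [id_eq]
      rw [h2, Real.mul_self_sqrt h, div_self hx, ind, if_neg hx]
  rw [cal_id] at h
  exact h

lemma one_sub_ind_psd (hH : H.PosSemidef) : (1 - cal hH.1 ind).PosSemidef := by
  rw [← cal_one hH.1, cal_sub]
  refine cal_posSemidef _ fun x => ?_
  unfold ind
  split <;> norm_num

lemma one_sub_ind_mul (hH : H.PosSemidef) : (1 - cal hH.1 ind) * H * (1 - cal hH.1 ind) = 0 := by
  have h : (cal hH.1 (fun _ => 1) - cal hH.1 ind) * cal hH.1 id * (cal hH.1 (fun _ => 1) - cal hH.1 ind) = 0 := by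
    rw [cal_sub, cal_mul, cal_mul]
    rw [show (fun x => (1 - ind x) * id x * (1 - ind x)) = fun _ => (0:ℝ) by
      funext x; by_cases hx : x = 0 <;> simp [ind, hx]]
    exact cal_zero _
  rw [cal_id, cal_one] at h
  exact h

lemma range_absorb {m : Type*} [Fintype m] {ρ : Matrix d d ℂ} (hρ : ρ.PosSemidef)
    (X : Matrix d m ℂ) (hX : (ρ - X * Xᴴ).PosSemidef) :
    cal hρ.1 ind * X = X := by
  set Q : Matrix d d ℂ := cal hρ.1 ind with hQ
  have hM : (1 - Q) * X = 0 := by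
    apply neg_psd_self_mul_conjTranspose
    have h1 : ((1 - Q) * X) * ((1 - Q) * X)ᴴ = (1-Q) * (X * Xᴴ) * (1-Q) := by
      rw [conjTranspose_mul, conjTranspose_sub, conjTranspose_one, hQ, conjTranspose_cal]
      simp only [Matrix.mul_assoc]
    have h2 : -(((1 - Q) * X) * ((1 - Q) * X)ᴴ) = (1-Q) * (ρ - X * Xᴴ) * (1-Q)ᴴ := by
      rw [h1, conjTranspose_sub, conjTranspose_one, hQ, conjTranspose_cal, ← hQ]
      have e : (1-Q) * (ρ - X * Xᴴ) * (1-Q) = (1-Q) * ρ * (1-Q) - (1-Q) * (X * Xᴴ) * (1-Q) := by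
        noncomm_ring
      rw [e, hQ, one_sub_ind_mul hρ, zero_sub]
    rw [h2]
    exact hX.mul_mul_conjTranspose_same _
  have h3 : X - Q * X = 0 := by
    rw [← hM, Matrix.sub_mul, Matrix.one_mul]
  exact (sub_eq_zero.mp h3).symm

lemma contraction {m : Type*} [Fintype m] {ρ : Matrix d d ℂ} (hρ : ρ.PosSemidef)
    (X : Matrix d m ℂ) (hX : (ρ - X * Xᴴ).PosSemidef) :
    (1 - (rinv hρ * X) * (rinv hρ * X)ᴴ).PosSemidef := by
  have h1 : (1 : Matrix d d ℂ) - (rinv hρ * X) * (rinv hρ * X)ᴴ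
      = (1 - cal hρ.1 ind) + rinv hρ * (ρ - X * Xᴴ) * (rinv hρ)ᴴ := by
    rw [conjTranspose_mul, rinv_herm]
    have e : rinv hρ * (ρ - X * Xᴴ) * rinv hρ
        = rinv hρ * ρ * rinv hρ - rinv hρ * (X * Xᴴ) * rinv hρ := by
      noncomm_ring
    rw [e, rinv_mul_rinv hρ]
    simp only [Matrix.mul_assoc]
    abel
  rw [h1]
  exact (one_sub_ind_psd hρ).add (hX.mul_mul_conjTranspose_same _)


lemma matSqrt_eq {H : Matrix d d ℂ} (hH : H.PosSemidef) : matSqrt H = hH.sqrt := dif_pos hH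

lemma conjTranspose_mul_self_sqrt {ρ σ : Matrix d d ℂ} (hρ : ρ.PosSemidef) (hσ : σ.PosSemidef) :
    (hσ.sqrt * hρ.sqrt)ᴴ * (hσ.sqrt * hρ.sqrt) = hρ.sqrt * σ * hρ.sqrt := by
  rw [conjTranspose_mul, hρ.posSemidef_sqrt.1.eq, hσ.posSemidef_sqrt.1.eq]
  calc hρ.sqrt * hσ.sqrt * (hσ.sqrt * hρ.sqrt)
      = hρ.sqrt * (hσ.sqrt * hσ.sqrt) * hρ.sqrt := by simp only [Matrix.mul_assoc]
    _ = hρ.sqrt * σ * hρ.sqrt := by rw [hσ.sqrt_mul_self]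

lemma sqrtProd_posSemidef {ρ σ : Matrix d d ℂ} (hρ : ρ.PosSemidef) (hσ : σ.PosSemidef) :
    (hρ.sqrt * σ * hρ.sqrt).PosSemidef := by
  rw [← conjTranspose_mul_self_sqrt hρ hσ]
  exact posSemidef_conjTranspose_mul_self _

lemma achieve {ρ σ : Matrix d d ℂ} (hρ : ρ.PosSemidef) (hσ : σ.PosSemidef) :
    ∃ X : Matrix d d ℂ, (ρ - X * Xᴴ).PosSemidef ∧
      (X * matSqrt σ).trace = (matSqrt (matSqrt ρ * σ * matSqrt ρ)).trace := by
  rw [matSqrt_eq hρ, matSqrt_eq hσ]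
  obtain ⟨r, hr⟩ : ∃ r, r = hρ.sqrt := ⟨_, rfl⟩
  obtain ⟨s, hs⟩ : ∃ s, s = hσ.sqrt := ⟨_, rfl⟩
  rw [← hr, ← hs]
  obtain ⟨A, hA⟩ : ∃ A, A = s * r := ⟨_, rfl⟩
  obtain ⟨H, hHdef⟩ : ∃ H, H = r * σ * r := ⟨_, rfl⟩
  rw [← hHdef]
  have hrH : rᴴ = r := by rw [hr]; exact hρ.posSemidef_sqrt.1.eq
  have hrr : r * r = ρ := by rw [hr]; exact hρ.sqrt_mul_self
  have hAH : Aᴴ * A = H := by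
    rw [hA, hr, hs, hHdef, hr]; exact conjTranspose_mul_self_sqrt hρ hσ
  have hH : H.PosSemidef := by
    rw [hHdef, hr]; exact sqrtProd_posSemidef hρ hσ
  rw [matSqrt_eq hH]
  refine ⟨r * (rinv hH * Aᴴ), ?_, ?_⟩
  · have hXH : (r * (rinv hH * Aᴴ))ᴴ = A * rinv hH * r := by
      rw [conjTranspose_mul, conjTranspose_mul, conjTranspose_conjTranspose, rinv_herm, hrH]
    have hXX : (r * (rinv hH * Aᴴ)) * (r * (rinv hH * Aᴴ))ᴴ = r * cal hH.1 ind * r := by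
      rw [hXH]
      calc r * (rinv hH * Aᴴ) * (A * rinv hH * r)
          = r * (rinv hH * (Aᴴ * A) * rinv hH) * r := by simp only [Matrix.mul_assoc]
        _ = r * (cal hH.1 ind) * r := by rw [hAH, rinv_mul_rinv hH]
    have key : ρ - (r * (rinv hH * Aᴴ)) * (r * (rinv hH * Aᴴ))ᴴ
        = rᴴ * (1 - cal hH.1 ind) * r := by
      rw [hXX]
      rw [hrH]
      rw [Matrix.mul_sub]
      rw [Matrix.sub_mul]
      rw [Matrix.mul_one]
      rw [hrr]
    rw [key]
    exact (one_sub_ind_psd hH).conjTranspose_mul_mul_same _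
  · have h1 : (r * (rinv hH * Aᴴ) * s).trace = (rinv hH * H).trace := by
      rw [trace_mul_comm]
      calc (s * (r * (rinv hH * Aᴴ))).trace
          = (A * rinv hH * Aᴴ).trace := by rw [hA]; simp only [Matrix.mul_assoc]
        _ = (Aᴴ * (A * rinv hH)).trace := trace_mul_comm _ _
        _ = ((Aᴴ * A) * rinv hH).trace := by rw [Matrix.mul_assoc]
        _ = (rinv hH * (Aᴴ * A)).trace := trace_mul_comm _ _
        _ = (rinv hH * H).trace := by rw [hAH]
    rw [h1]
    have h2 : rinv hH * H = cal hH.1 (fun x => (Real.sqrt x)⁻¹ * x) := by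
      have h3 := cal_mul hH.1 (fun x => (Real.sqrt x)⁻¹) id
      rw [cal_id] at h3
      simp only [id_eq] at h3
      rw [rinv, h3]
    rw [h2, trace_cal, sqrt_eq_cal, trace_cal]
    norm_cast
    refine Finset.sum_congr rfl fun j _ => ?_
    have h := hH.eigenvalues_nonneg j
    set x := hH.1.eigenvalues j
    by_cases hx : x = 0
    · simp [hx]
    · have hs' : Real.sqrt x ≠ 0 := by positivity
      rw [inv_mul_eq_div, div_eq_iff hs', Real.mul_self_sqrt h]


lemma trace_matSqrt_real {H : Matrix d d ℂ} (hH : H.PosSemidef) :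
    (matSqrt H).trace = (((matSqrt H).trace.re : ℝ) : ℂ) := by
  rw [matSqrt_eq hH, sqrt_eq_cal, trace_cal, Complex.ofReal_re]

lemma entry (U N : Matrix d d ℂ) (j : d) :
    (star U * N * U) j j = star (fun i => U i j) ⬝ᵥ (N *ᵥ fun i => U i j) := by
  simp only [mul_apply, mulVec, dotProduct, Matrix.star_apply, Pi.star_apply, Finset.sum_mul,
    Finset.mul_sum]
  rw [Finset.sum_comm]
  refine Finset.sum_congr rfl fun k _ => Finset.sum_congr rfl fun l _ => by ring

/-- key contraction bound on quadratic forms -/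
lemma quad_le {m : Type*} [Fintype m] {W : Matrix d m ℂ} (hW : (1 - W * Wᴴ).PosSemidef) (u : d → ℂ) :
    ((star (Wᴴ *ᵥ u)) ⬝ᵥ (Wᴴ *ᵥ u)).re ≤ (star u ⬝ᵥ u).re := by
  have h0 := hW.re_dotProduct_nonneg u
  have e1 : star u ⬝ᵥ ((1 - W * Wᴴ) *ᵥ u) = star u ⬝ᵥ u - star u ⬝ᵥ ((W * Wᴴ) *ᵥ u) := by
    rw [Matrix.sub_mulVec, dotProduct_sub, Matrix.one_mulVec]
  have e2 : star (Wᴴ *ᵥ u) ⬝ᵥ (Wᴴ *ᵥ u) = star u ⬝ᵥ ((W * Wᴴ) *ᵥ u) := by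
    rw [star_mulVec, conjTranspose_conjTranspose, ← Matrix.mulVec_mulVec,
      Matrix.dotProduct_mulVec, Matrix.dotProduct_mulVec, Matrix.dotProduct_mulVec]
  rw [e2]
  rw [e1] at h0
  have h0' : 0 ≤ (star u ⬝ᵥ u).re - (star u ⬝ᵥ ((W * Wᴴ) *ᵥ u)).re := by
    simpa [map_sub] using h0
  linarith

lemma core {ρ σ : Matrix d d ℂ} (hρ : ρ.PosSemidef) (hσ : σ.PosSemidef)
    {m : Type*} [Fintype m] (X Y : Matrix d m ℂ)
    (hX : (ρ - X * Xᴴ).PosSemidef) (hY : (σ - Y * Yᴴ).PosSemidef) :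
    ((X * Yᴴ).trace).re ≤ ((matSqrt (matSqrt ρ * σ * matSqrt ρ)).trace).re := by
  rw [matSqrt_eq hρ]
  obtain ⟨r, hr⟩ : ∃ r, r = hρ.sqrt := ⟨_, rfl⟩
  obtain ⟨s, hs⟩ : ∃ s, s = hσ.sqrt := ⟨_, rfl⟩
  rw [← hr]
  obtain ⟨A, hA⟩ : ∃ A, A = s * r := ⟨_, rfl⟩
  obtain ⟨H, hHdef⟩ : ∃ H, H = r * σ * r := ⟨_, rfl⟩
  rw [← hHdef]
  have hrH : rᴴ = r := by rw [hr]; exact hρ.posSemidef_sqrt.1.eq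
  have hsHerm : sᴴ = s := by rw [hs]; exact hσ.posSemidef_sqrt.1.eq
  have hAH : Aᴴ * A = H := by
    rw [hA, hr, hs, hHdef, hr]; exact conjTranspose_mul_self_sqrt hρ hσ
  have hH : H.PosSemidef := by
    rw [hHdef, hr]; exact sqrtProd_posSemidef hρ hσ
  rw [matSqrt_eq hH, sqrt_eq_cal, trace_cal, Complex.ofReal_re]
  -- contractions
  obtain ⟨W₁, hW₁⟩ : ∃ W, W = rinv hρ * X := ⟨_, rfl⟩
  obtain ⟨W₂, hW₂⟩ : ∃ W, W = rinv hσ * Y := ⟨_, rfl⟩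
  have hrW₁ : r * W₁ = X := by
    rw [hW₁, hr, ← Matrix.mul_assoc, sqrt_mul_rinv hρ]
    exact range_absorb hρ X hX
  have hsW₂ : s * W₂ = Y := by
    rw [hW₂, hs, ← Matrix.mul_assoc, sqrt_mul_rinv hσ]
    exact range_absorb hσ Y hY
  have hC₁ : (1 - W₁ * W₁ᴴ).PosSemidef := by rw [hW₁]; exact contraction hρ X hX
  have hC₂ : (1 - W₂ * W₂ᴴ).PosSemidef := by rw [hW₂]; exact contraction hσ Y hY
  clear hW₁ hW₂
  -- trace identity
  have htr : (X * Yᴴ).trace = ((W₁ * W₂ᴴ) * A).trace := by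
    have h1 : X * Yᴴ = r * (W₁ * W₂ᴴ) * s := by
      rw [← hrW₁, ← hsW₂, conjTranspose_mul, hsHerm]
      simp only [Matrix.mul_assoc]
    rw [h1, trace_mul_cycle, trace_mul_comm, ← hA]
  rw [htr]
  -- eigenbasis expansion
  obtain ⟨U, hU⟩ : ∃ U : Matrix d d ℂ, U = hH.1.eigenvectorUnitary.1 := ⟨_, rfl⟩
  have hU1 : U * star U = 1 := by rw [hU]; exact Unitary.coe_mul_star_self _
  have hU2 : star U * U = 1 := by rw [hU]; exact Unitary.coe_star_mul_self _
  have hdiag : star U * H * U = diagonal ((↑) ∘ hH.1.eigenvalues) := by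
    rw [hU]; have := hH.1.conjStarAlgAut_star_eigenvectorUnitary
    rw [Unitary.conjStarAlgAut_star_apply] at this; exact this
  have htrU : (star U * ((W₁ * W₂ᴴ) * A) * U).trace = ((W₁ * W₂ᴴ) * A).trace := by
    rw [trace_mul_cycle]
    rw [hU1, Matrix.one_mul]
  rw [← htrU, Matrix.trace]
  simp only [diag_apply, Complex.re_sum]
  refine Finset.sum_le_sum fun j _ => ?_
  rw [entry]
  obtain ⟨u, hu⟩ : ∃ u : d → ℂ, u = fun i => U i j := ⟨_, rfl⟩
  rw [show (fun i => U i j) = u from hu.symm]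
  -- the three inner product computations
  have hstep : ((W₁ * W₂ᴴ) * A) *ᵥ u = W₁ *ᵥ (W₂ᴴ *ᵥ (A *ᵥ u)) := by
    rw [← Matrix.mulVec_mulVec, ← Matrix.mulVec_mulVec]
  have hsplit : star u ⬝ᵥ (W₁ *ᵥ (W₂ᴴ *ᵥ (A *ᵥ u))) = star (W₁ᴴ *ᵥ u) ⬝ᵥ (W₂ᴴ *ᵥ (A *ᵥ u)) := by
    rw [star_mulVec, conjTranspose_conjTranspose, Matrix.dotProduct_mulVec]
  have hnu : (star u ⬝ᵥ u).re = 1 := by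
    have h1 : star u ⬝ᵥ u = (star U * U) j j := by
      rw [hu]
      simp only [mul_apply, dotProduct, Matrix.star_apply, Pi.star_apply]
    rw [h1, hU2, one_apply_eq]
    simp
  have hna : (star (A *ᵥ u) ⬝ᵥ (A *ᵥ u)).re = hH.1.eigenvalues j := by
    have h1 : star (A *ᵥ u) ⬝ᵥ (A *ᵥ u) = star u ⬝ᵥ ((Aᴴ * A) *ᵥ u) := by
      rw [star_mulVec, ← Matrix.mulVec_mulVec, Matrix.dotProduct_mulVec,
        Matrix.dotProduct_mulVec, Matrix.dotProduct_mulVec]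
    rw [h1, hAH, hu, ← entry U H j, hdiag, diagonal_apply_eq]
    simp
  -- assemble the per-term bound
  rw [hstep, hsplit]
  have b1 : (star (W₁ᴴ *ᵥ u) ⬝ᵥ (W₁ᴴ *ᵥ u)).re ≤ 1 := by
    rw [← hnu]; exact quad_le hC₁ u
  have b2 : (star (W₂ᴴ *ᵥ (A *ᵥ u)) ⬝ᵥ (W₂ᴴ *ᵥ (A *ᵥ u))).re ≤ hH.1.eigenvalues j := by
    rw [← hna]; exact quad_le hC₂ (A *ᵥ u)
  calc (star (W₁ᴴ *ᵥ u) ⬝ᵥ (W₂ᴴ *ᵥ (A *ᵥ u))).re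
      ≤ ‖star (W₁ᴴ *ᵥ u) ⬝ᵥ (W₂ᴴ *ᵥ (A *ᵥ u))‖ := Complex.re_le_norm _
    _ ≤ Real.sqrt ((star (W₁ᴴ *ᵥ u) ⬝ᵥ (W₁ᴴ *ᵥ u)).re)
        * Real.sqrt ((star (W₂ᴴ *ᵥ (A *ᵥ u)) ⬝ᵥ (W₂ᴴ *ᵥ (A *ᵥ u))).re) := cs_dot _ _
    _ ≤ Real.sqrt 1 * Real.sqrt (hH.1.eigenvalues j) :=
        mul_le_mul (Real.sqrt_le_sqrt b1) (Real.sqrt_le_sqrt b2) (Real.sqrt_nonneg _)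
          (Real.sqrt_nonneg _)
    _ = Real.sqrt (hH.1.eigenvalues j) := by rw [Real.sqrt_one, one_mul]


lemma smul_psd {M : Matrix d d ℂ} (hM : M.PosSemidef) {q : ℝ} (hq : 0 ≤ q) :
    (q • M).PosSemidef := by
  have h : q • M = (q : ℂ) • M := by
    ext i j; simp [Matrix.smul_apply, Complex.real_smul]
  rw [h]
  refine Matrix.PosSemidef.of_dotProduct_mulVec_nonneg ?_ ?_
  · have := hM.1
    unfold Matrix.IsHermitian at *
    rw [conjTranspose_smul, this]
    congr 1
    simp
  · intro x
    rw [smul_mulVec, dotProduct_smul]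
    have h1 : (0:ℂ) ≤ (q:ℂ) := by exact_mod_cast Complex.zero_le_real.mpr hq
    exact mul_nonneg h1 (hM.dotProduct_mulVec_nonneg x)

lemma prod_psd {ρ σ : Matrix d d ℂ} (hρ : ρ.PosSemidef) (hσ : σ.PosSemidef) :
    (matSqrt ρ * σ * matSqrt ρ).PosSemidef := by
  rw [matSqrt_eq hρ]; exact sqrtProd_posSemidef hρ hσ

theorem fid_concave_fst' {ρ₁ ρ₂ σ : Matrix d d ℂ}
    (hρ₁ : ρ₁.PosSemidef) (hρ₂ : ρ₂.PosSemidef) (hσ : σ.PosSemidef)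
    (q : ℝ) (hq0 : 0 ≤ q) (hq1 : q ≤ 1) :
    q * fid ρ₁ σ + (1 - q) * fid ρ₂ σ ≤ fid (q • ρ₁ + (1 - q) • ρ₂) σ := by
  have hq1' : (0:ℝ) ≤ 1 - q := by linarith
  unfold fid
  set ρ := q • ρ₁ + (1 - q) • ρ₂ with hρdef
  have hρ : ρ.PosSemidef := (smul_psd hρ₁ hq0).add (smul_psd hρ₂ hq1')
  set c₁ : ℝ := (matSqrt (matSqrt ρ₁ * σ * matSqrt ρ₁)).trace.re with hc₁
  set c₂ : ℝ := (matSqrt (matSqrt ρ₂ * σ * matSqrt ρ₂)).trace.re with hc₂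
  set c : ℝ := (matSqrt (matSqrt ρ * σ * matSqrt ρ)).trace.re with hc
  set T : ℝ := q * c₁ ^ 2 + (1 - q) * c₂ ^ 2 with hT
  have hTnn : 0 ≤ T := add_nonneg (mul_nonneg hq0 (sq_nonneg _)) (mul_nonneg hq1' (sq_nonneg _))
  rcases eq_or_lt_of_le hTnn with hT0 | hTpos
  · rw [← hT0]
    exact sq_nonneg c
  -- main case : T > 0
  obtain ⟨X₁, hX₁psd, hX₁tr⟩ := achieve hρ₁ hσ
  obtain ⟨X₂, hX₂psd, hX₂tr⟩ := achieve hρ₂ hσ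
  set N : ℝ := Real.sqrt T with hN
  have hNpos : 0 < N := Real.sqrt_pos.mpr hTpos
  have hN2 : N ^ 2 = T := Real.sq_sqrt hTnn
  set α : ℝ := Real.sqrt q * c₁ / N with hα
  set β : ℝ := Real.sqrt (1 - q) * c₂ / N with hβ
  set s : Matrix d d ℂ := matSqrt σ with hs
  have hsH : sᴴ = s := by rw [hs, matSqrt_eq hσ]; exact hσ.posSemidef_sqrt.1.eq
  have hss : s * s = σ := by rw [hs, matSqrt_eq hσ]; exact hσ.sqrt_mul_self
  set X : Matrix d (d ⊕ d) ℂ :=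
    fromCols (((Real.sqrt q : ℝ) : ℂ) • X₁) (((Real.sqrt (1 - q) : ℝ) : ℂ) • X₂) with hX
  set Y : Matrix d (d ⊕ d) ℂ := fromCols ((α : ℂ) • s) ((β : ℂ) • s) with hY
  have hstar : ∀ a : ℝ, (star ((a:ℝ):ℂ)) = ((a:ℝ):ℂ) := fun a => by
    rw [Complex.star_def, Complex.conj_ofReal]
  have hreal : ∀ (a : ℝ) (M : Matrix d d ℂ), ((a:ℝ):ℂ) • M = a • M := fun a M => by
    ext i j; simp [Matrix.smul_apply, Complex.real_smul]
  have hXXH : X * Xᴴ = q • (X₁ * X₁ᴴ) + (1 - q) • (X₂ * X₂ᴴ) := by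
    rw [hX, conjTranspose_fromCols_eq_fromRows_conjTranspose, fromCols_mul_fromRows]
    rw [conjTranspose_smul, conjTranspose_smul]
    rw [smul_mul_assoc, smul_mul_assoc, mul_smul_comm, mul_smul_comm]
    rw [smul_smul, smul_smul, hstar, hstar]
    rw [show (((Real.sqrt q : ℝ) : ℂ) * ((Real.sqrt q : ℝ) : ℂ)) = ((q : ℝ) : ℂ) by
      rw [← Complex.ofReal_mul, Real.mul_self_sqrt hq0]]
    rw [show (((Real.sqrt (1-q) : ℝ) : ℂ) * ((Real.sqrt (1-q) : ℝ) : ℂ)) = (((1-q) : ℝ) : ℂ) by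
      rw [← Complex.ofReal_mul, Real.mul_self_sqrt hq1']]
    rw [hreal, hreal]
  have hXpsd : (ρ - X * Xᴴ).PosSemidef := by
    have h1 : ρ - X * Xᴴ = q • (ρ₁ - X₁ * X₁ᴴ) + (1 - q) • (ρ₂ - X₂ * X₂ᴴ) := by
      rw [hXXH, hρdef, smul_sub, smul_sub]
      abel
    rw [h1]
    exact (smul_psd hX₁psd hq0).add (smul_psd hX₂psd hq1')
  have hab : α ^ 2 + β ^ 2 = 1 := by
    rw [hα, hβ]
    rw [div_pow, div_pow, mul_pow, mul_pow, Real.sq_sqrt hq0, Real.sq_sqrt hq1']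
    rw [← add_div, hN2, hT]
    exact div_self (ne_of_gt hTpos)
  have hYpsd : (σ - Y * Yᴴ).PosSemidef := by
    have h1 : Y * Yᴴ = ((α^2 + β^2 : ℝ) : ℂ) • σ := by
      rw [hY, conjTranspose_fromCols_eq_fromRows_conjTranspose, fromCols_mul_fromRows]
      rw [conjTranspose_smul, conjTranspose_smul, hsH]
      rw [smul_mul_assoc, smul_mul_assoc, mul_smul_comm, mul_smul_comm, smul_smul, smul_smul]
      rw [hstar, hstar, hss, ← add_smul]
      congr 1
      push_cast
      ring
    have h2 : σ - Y * Yᴴ = 0 := by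
      rw [h1, hab]
      norm_num
    rw [h2]
    exact Matrix.PosSemidef.zero
  have hcore : (X * Yᴴ).trace.re ≤ c := core hρ hσ X Y hXpsd hYpsd
  have htr : (X * Yᴴ).trace
      = ((Real.sqrt q * α * c₁ + Real.sqrt (1-q) * β * c₂ : ℝ) : ℂ) := by
    rw [hX, hY, conjTranspose_fromCols_eq_fromRows_conjTranspose, fromCols_mul_fromRows]
    rw [conjTranspose_smul, conjTranspose_smul, hsH, hstar, hstar]
    rw [smul_mul_assoc, smul_mul_assoc, mul_smul_comm, mul_smul_comm, smul_smul, smul_smul]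
    rw [trace_add, trace_smul, trace_smul, hX₁tr, hX₂tr]
    rw [trace_matSqrt_real (prod_psd hρ₁ hσ), trace_matSqrt_real (prod_psd hρ₂ hσ)]
    rw [← hc₁, ← hc₂, smul_eq_mul, smul_eq_mul]
    push_cast
    ring
  have hre : (X * Yᴴ).trace.re = Real.sqrt q * α * c₁ + Real.sqrt (1-q) * β * c₂ := by
    rw [htr, Complex.ofReal_re]
  have hq2 : Real.sqrt q ^ 2 = q := Real.sq_sqrt hq0
  have hq2' : Real.sqrt (1-q) ^ 2 = 1 - q := Real.sq_sqrt hq1'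
  have hN2' : N ^ 2 = q * c₁ ^ 2 + (1 - q) * c₂ ^ 2 := hN2.trans hT
  have hval : Real.sqrt q * α * c₁ + Real.sqrt (1-q) * β * c₂ = N := by
    rw [hα, hβ]
    have e : Real.sqrt q * (Real.sqrt q * c₁ / N) * c₁
        + Real.sqrt (1-q) * (Real.sqrt (1-q) * c₂ / N) * c₂
        = ((Real.sqrt q * Real.sqrt q) * c₁ ^ 2 + (Real.sqrt (1-q) * Real.sqrt (1-q)) * c₂ ^ 2) / N := by
      ring
    rw [e, Real.mul_self_sqrt hq0, Real.mul_self_sqrt hq1', ← hN2']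
    rw [pow_two, mul_div_assoc, div_self (ne_of_gt hNpos), mul_one]
  rw [hre, hval] at hcore
  calc q * c₁ ^ 2 + (1 - q) * c₂ ^ 2 = N ^ 2 := hN2'.symm
    _ ≤ c ^ 2 := pow_le_pow_left₀ (le_of_lt hNpos) hcore 2


end FidAux

/-- Fidelity is concave in its first argument. -/
theorem fid_concave_fst {d : Type*} [Fintype d] [DecidableEq d]
    (ρ₁ ρ₂ σ : Matrix d d ℂ) (hρ₁ : IsDensity ρ₁) (hρ₂ : IsDensity ρ₂) (hσ : IsDensity σ)
    (q : ℝ) (hq0 : 0 ≤ q) (hq1 : q ≤ 1) :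
    q * fid ρ₁ σ + (1 - q) * fid ρ₂ σ ≤ fid (q • ρ₁ + (1 - q) • ρ₂) σ :=
  FidAux.fid_concave_fst' hρ₁.1 hρ₂.1 hσ.1 q hq0 hq1
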